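/- Fix a parameter J > 0 and integers m ≥ 1, x₃ ≥ 0. The number of x₃-tuples of normalized J-sequences with total cardinality m is at most (J+1)^{m−1}. Here a J-sequence is a finite increasing sequence of nonnegative integers in which consecutive elements differ by at most J, and it is normalized if its first element is 0. -/

import Mathlib

/-- A finite nonempty set of nonnegative integers, viewed as an increasing sequence, is a
normalized `J`-sequence if its first element is `0` and consecutive elements (in
increasing order) differ by at most `J`. -/
def IsNormalizedJSeq (J : ℝ) (A : Finset ℕ) : Prop :=
  A.Nonempty ∧ 0 ∈ A ∧
    ∀ a ∈ A, ∀ b ∈ A, a < b → (∀ c ∈ A, ¬(a < c ∧ c < b)) → (b : ℝ) - (a : ℝ) ≤ J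

namespace JSeqAux

/-- Rebuild an increasing list from a start value and gaps. -/
def fromGaps : ℕ → List ℕ → List ℕ
  | s, [] => [s]
  | s, g :: gs => s :: fromGaps (s + g) gs

/-- Gaps between consecutive elements of a list. -/
def gapsOf : List ℕ → List ℕ
  | a :: b :: t => (b - a) :: gapsOf (b :: t)
  | _ => []

lemma fromGaps_gapsOf : ∀ (l : List ℕ) (a : ℕ), (a :: l).Pairwise (· < ·) →
    fromGaps a (gapsOf (a :: l)) = a :: l
  | [], a, _ => by simp [gapsOf, fromGaps]
  | b :: t, a, h => by
    have hab : a < b := (List.pairwise_cons.1 h).1 b (by simp)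
    have := fromGaps_gapsOf t b (List.pairwise_cons.1 h).2
    simp only [gapsOf, fromGaps, Nat.add_sub_cancel' hab.le]
    rw [this]

lemma length_gapsOf : ∀ (l : List ℕ) (a : ℕ), (gapsOf (a :: l)).length = l.length
  | [], _ => rfl
  | b :: t, a => by simp [gapsOf, length_gapsOf t b]

lemma gaps_mem (n : ℕ) : ∀ l : List ℕ, l.Pairwise (· < ·) →
    (∀ a ∈ l, ∀ b ∈ l, a < b → (∀ c ∈ l, ¬(a < c ∧ c < b)) → b - a ≤ n) →
    ∀ x ∈ gapsOf l, 0 < x ∧ x ≤ n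
  | [], _, _ => by simp [gapsOf]
  | [a], _, _ => by simp [gapsOf]
  | a :: b :: t, hs, hyp => by
    have hab : a < b := (List.pairwise_cons.1 hs).1 b (by simp)
    intro x hx
    rcases List.mem_cons.1 hx with rfl | hx
    · refine ⟨by omega, hyp a (by simp) b (by simp) hab ?_⟩
      intro c hc
      rcases List.mem_cons.1 hc with rfl | hc
      · omega
      rcases List.mem_cons.1 hc with rfl | hc
      · omega
      · have : b < c := (List.pairwise_cons.1 (List.pairwise_cons.1 hs).2).1 c hc
        omega
    · refine gaps_mem n (b :: t) (List.pairwise_cons.1 hs).2 ?_ x hx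
      intro a' ha' b' hb' hlt hbet
      refine hyp a' (List.mem_cons_of_mem _ ha') b' (List.mem_cons_of_mem _ hb') hlt ?_
      intro c hc
      rcases List.mem_cons.1 hc with rfl | hc
      · have : c < a' := (List.pairwise_cons.1 hs).1 a' ha'
        omega
      · exact hbet c hc

lemma sort_head_eq_zero (A : Finset ℕ) (h0 : 0 ∈ A) (a : ℕ) (t : List ℕ)
    (h : A.sort (· ≤ ·) = a :: t) : a = 0 := by
  have hmem : 0 ∈ A.sort (· ≤ ·) := (Finset.mem_sort _).2 h0
  have hs := Finset.pairwise_sort A (· ≤ ·)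
  rw [h] at hmem hs
  rcases List.mem_cons.1 hmem with h | h
  · omega
  · have := (List.pairwise_cons.1 hs).1 0 h; omega

lemma length_intercalate0 (x : ℕ) : ∀ ls : List (List ℕ), ls ≠ [] →
    (List.intercalate [x] ls).length = (ls.map List.length).sum + (ls.length - 1)
  | [], h => absurd rfl h
  | [a], _ => by simp [List.intercalate]
  | a :: b :: t, _ => by
    have ih := length_intercalate0 x (b :: t) (by simp)
    simp only [List.intercalate, List.intersperse_cons_cons, List.flatten_cons] at ih ⊢
    simp at ih ⊢
    omega

lemma mem_intercalate0 (x n : ℕ) (hx : x ≤ n) : ∀ ls : List (List ℕ),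
    (∀ l ∈ ls, ∀ y ∈ l, y ≤ n) → ∀ y ∈ List.intercalate [x] ls, y ≤ n
  | [], _ => by simp [List.intercalate]
  | [a], h => by
    simpa [List.intercalate] using h a (by simp)
  | a :: b :: t, h => by
    have ih := mem_intercalate0 x n hx (b :: t) (fun l hl => h l (List.mem_cons_of_mem _ hl))
    have hrw : List.intercalate [x] (a :: b :: t) = a ++ x :: List.intercalate [x] (b :: t) := by
      simp [List.intercalate, List.intersperse_cons_cons]
    intro y hy
    rw [hrw, List.mem_append, List.mem_cons] at hy
    rcases hy with hy | rfl | hy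
    · exact h a (by simp) y hy
    · exact hx
    · exact ih y hy

/-- The code of a tuple: gap lists joined with `0` separators. -/
def codeOf {x₃ : ℕ} (T : Fin x₃ → Finset ℕ) : List ℕ :=
  List.intercalate [0] (List.ofFn fun i => gapsOf ((T i).sort (· ≤ ·)))

lemma exists_sort_cons (A : Finset ℕ) (h0 : 0 ∈ A) :
    ∃ a t, A.sort (· ≤ ·) = a :: t := by
  have hne : A.sort (· ≤ ·) ≠ [] := by
    intro h
    have : 0 ∈ A.sort (· ≤ ·) := (Finset.mem_sort _).2 h0
    rw [h] at this; simp at this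
  exact List.exists_cons_of_ne_nil hne

end JSeqAux

/-- for `J > 0` and `m ≥ 1`, the number of `x₃`-tuples of normalized
`J`-sequences of total cardinality `m` is at most `(J+1)^{m−1}`. -/
theorem count_tuples_of_normalized_J_sequences (J : ℝ) (hJ : 0 < J) (m x₃ : ℕ)
    (hm : 1 ≤ m) :
    (Nat.card {T : Fin x₃ → Finset ℕ //
        (∀ i, IsNormalizedJSeq J (T i)) ∧ ∑ i, (T i).card = m} : ℝ) ≤
      (J + 1) ^ (m - 1) := by
  classical
  open JSeqAux in
  have hJ1 : (1 : ℝ) ≤ J + 1 := by linarith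
  rcases Nat.eq_zero_or_pos x₃ with rfl | hx
  · have : IsEmpty {T : Fin 0 → Finset ℕ //
        (∀ i, IsNormalizedJSeq J (T i)) ∧ ∑ i, (T i).card = m} := by
      constructor
      rintro ⟨T, _, hsum⟩
      simp at hsum
      omega
    rw [Nat.card_of_isEmpty]
    norm_num
    positivity
  set n : ℕ := ⌊J⌋₊ with hn
  -- facts about members of the subtype
  have key : ∀ T : Fin x₃ → Finset ℕ, (∀ i, IsNormalizedJSeq J (T i)) →
      (∀ i, ∀ x ∈ JSeqAux.gapsOf ((T i).sort (· ≤ ·)), 0 < x ∧ x ≤ n) := by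
    intro T hT i
    apply JSeqAux.gaps_mem n _ ((Finset.sortedLT_sort _).pairwise)
    intro a ha b hb hab hbet
    have hmem : ∀ c, c ∈ (T i).sort (· ≤ ·) ↔ c ∈ T i := fun c => Finset.mem_sort _
    have hb' := (hT i).2.2 a ((hmem a).1 ha) b ((hmem b).1 hb) hab
      (fun c hc => hbet c ((hmem c).2 hc))
    have : ((b - a : ℕ) : ℝ) ≤ J := by
      rw [Nat.cast_sub hab.le]; exact hb'
    exact Nat.le_floor this
  -- recovering T from gap lists
  have recov : ∀ T : Fin x₃ → Finset ℕ, (∀ i, IsNormalizedJSeq J (T i)) → ∀ i,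
      JSeqAux.fromGaps 0 (JSeqAux.gapsOf ((T i).sort (· ≤ ·))) = (T i).sort (· ≤ ·) := by
    intro T hT i
    obtain ⟨a, t, hat⟩ := JSeqAux.exists_sort_cons (T i) (hT i).2.1
    have ha0 : a = 0 := JSeqAux.sort_head_eq_zero _ (hT i).2.1 a t hat
    have hsorted : (a :: t).Pairwise (· < ·) := by
      rw [← hat]; exact (Finset.sortedLT_sort _).pairwise
    rw [hat, ← ha0]
    exact JSeqAux.fromGaps_gapsOf t a hsorted
  -- length of the code
  have hlen : ∀ T : Fin x₃ → Finset ℕ, (∀ i, IsNormalizedJSeq J (T i)) →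
      (∑ i, (T i).card = m) → (JSeqAux.codeOf T).length = m - 1 := by
    intro T hT hsum
    have hnil : (List.ofFn fun i => JSeqAux.gapsOf ((T i).sort (· ≤ ·))) ≠ [] := by
      simp [List.ofFn_eq_nil_iff]; omega
    rw [JSeqAux.codeOf, JSeqAux.length_intercalate0 0 _ hnil]
    have hglen : ∀ i, (JSeqAux.gapsOf ((T i).sort (· ≤ ·))).length = (T i).card - 1 := by
      intro i
      obtain ⟨a, t, hat⟩ := JSeqAux.exists_sort_cons (T i) (hT i).2.1
      have hcard : (T i).card = t.length + 1 := by
        have := Finset.length_sort (α := ℕ) (· ≤ ·) (s := T i)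
        rw [← this, hat]; simp
      rw [hat, JSeqAux.length_gapsOf, hcard]
      simp
    have hsum' : (List.map List.length (List.ofFn fun i => JSeqAux.gapsOf ((T i).sort (· ≤ ·)))).sum
        = ∑ i, ((T i).card - 1) := by
      rw [List.map_ofFn, List.sum_ofFn]
      simp [Function.comp, hglen]
    rw [hsum']
    have h1 : ∀ i : Fin x₃, 1 ≤ (T i).card := fun i => Finset.card_pos.2 (hT i).1
    have hkey : ∑ i, ((T i).card - 1) + ∑ _i : Fin x₃, 1 = ∑ i, (T i).card := by
      rw [← Finset.sum_add_distrib]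
      exact Finset.sum_congr rfl fun i _ => by have := h1 i; omega
    simp only [Finset.sum_const, Finset.card_univ, Fintype.card_fin, smul_eq_mul, mul_one] at hkey
    simp only [List.length_ofFn]
    omega
  -- build the injection
  have hinj : ∃ f : {T : Fin x₃ → Finset ℕ //
        (∀ i, IsNormalizedJSeq J (T i)) ∧ ∑ i, (T i).card = m} →
        (Fin (m - 1) → Fin (n + 1)), Function.Injective f := by
    refine ⟨fun T j => ⟨(JSeqAux.codeOf T.1).get (Fin.cast (hlen T.1 T.2.1 T.2.2).symm j), ?_⟩, ?_⟩
    · have hmem : (JSeqAux.codeOf T.1).get (Fin.cast (hlen T.1 T.2.1 T.2.2).symm j) ∈ JSeqAux.codeOf T.1 :=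
        List.get_mem _ _
      have : ∀ y ∈ JSeqAux.codeOf T.1, y ≤ n := by
        rw [JSeqAux.codeOf]
        apply JSeqAux.mem_intercalate0 0 n (Nat.zero_le n)
        intro l hl y hy
        obtain ⟨i, rfl⟩ := List.mem_ofFn.1 hl
        exact (key T.1 T.2.1 i y hy).2
      exact Nat.lt_succ_of_le (this _ hmem)
    · rintro ⟨T₁, hT₁, hs₁⟩ ⟨T₂, hT₂, hs₂⟩ hfe
      have hlen1 := hlen T₁ hT₁ hs₁
      have hlen2 := hlen T₂ hT₂ hs₂
      have hLeq : JSeqAux.codeOf T₁ = JSeqAux.codeOf T₂ := by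
        apply List.ext_get (by rw [hlen1, hlen2])
        intro k h1 h2
        have : k < m - 1 := by omega
        have := congrFun hfe ⟨k, this⟩
        simpa using congrArg Fin.val this
      -- split the codes back
      have hsplit : ∀ (T : Fin x₃ → Finset ℕ), (∀ i, IsNormalizedJSeq J (T i)) →
          (JSeqAux.codeOf T).splitOn 0 = List.ofFn fun i => JSeqAux.gapsOf ((T i).sort (· ≤ ·)) := by
        intro T hT
        rw [JSeqAux.codeOf]
        apply List.splitOn_intercalate
        · intro l hl h0l
          obtain ⟨i, rfl⟩ := List.mem_ofFn.1 hl
          have := (key T hT i 0 h0l).1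
          omega
        · simp [List.ofFn_eq_nil_iff]; omega
      have hofn : (List.ofFn fun i => JSeqAux.gapsOf ((T₁ i).sort (· ≤ ·)))
          = List.ofFn fun i => JSeqAux.gapsOf ((T₂ i).sort (· ≤ ·)) := by
        rw [← hsplit T₁ hT₁, ← hsplit T₂ hT₂, hLeq]
      have hgaps : ∀ i, JSeqAux.gapsOf ((T₁ i).sort (· ≤ ·)) = JSeqAux.gapsOf ((T₂ i).sort (· ≤ ·)) :=
        fun i => congrFun (List.ofFn_inj.1 hofn) i
      have hTeq : T₁ = T₂ := by
        funext i
        have h1 := recov T₁ hT₁ i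
        have h2 := recov T₂ hT₂ i
        have hse : (T₁ i).sort (· ≤ ·) = (T₂ i).sort (· ≤ ·) := by
          rw [← h1, ← h2, hgaps i]
        have := congrArg List.toFinset hse
        rwa [Finset.sort_toFinset, Finset.sort_toFinset] at this
      simp [hTeq]
  obtain ⟨f, hf⟩ := hinj
  have hcard : Nat.card {T : Fin x₃ → Finset ℕ //
      (∀ i, IsNormalizedJSeq J (T i)) ∧ ∑ i, (T i).card = m} ≤ (n + 1) ^ (m - 1) := by
    have := Nat.card_le_card_of_injective f hf
    simpa [Nat.card_eq_fintype_card] using this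
  calc (Nat.card {T : Fin x₃ → Finset ℕ //
      (∀ i, IsNormalizedJSeq J (T i)) ∧ ∑ i, (T i).card = m} : ℝ)
      ≤ ((n + 1) ^ (m - 1) : ℕ) := by exact_mod_cast hcard
    _ ≤ (J + 1) ^ (m - 1) := by
        push_cast
        apply pow_le_pow_left₀ (by positivity)
        have : (n : ℝ) ≤ J := Nat.floor_le hJ.le
        linarith
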